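/- Let x, y, z, w be nonnegative real numbers and let ε be a real number with 0 < ε ≤ 1. If 2x + y + 2w ≤ z + 1 and 7z + 3 ≥ 4/ε, then 2z + 2y + 3(x+w) > 0 and (3z + 3y + 4(x+w)) / (2z + 2y + 3(x+w)) ≥ (10 - ε/2)/7. -/
import Mathlib

theorem stmt_14 (x y z w ε : ℝ) (hx : 0 ≤ x) (hy : 0 ≤ y) (hz : 0 ≤ z) (hw : 0 ≤ w)
    (hε0 : 0 < ε) (hε1 : ε ≤ 1)
    (h1 : 2 * x + y + 2 * w ≤ z + 1) (h2 : 7 * z + 3 ≥ 4 / ε) :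
    2 * z + 2 * y + 3 * (x + w) > 0 ∧
      (3 * z + 3 * y + 4 * (x + w)) / (2 * z + 2 * y + 3 * (x + w)) ≥
        (10 - ε / 2) / 7 := by
  have h2' : 4 ≤ ε * (7 * z + 3) := by
    rw [ge_iff_le, div_le_iff₀ hε0] at h2
    linarith [h2]
  have hzpos : 0 < z := by nlinarith
  have hden : 0 < 2 * z + 2 * y + 3 * (x + w) := by linarith
  refine ⟨hden, ?_⟩
  rw [ge_iff_le, div_le_div_iff₀ (by norm_num) hden]
  nlinarith [mul_nonneg hε0.le (add_nonneg hx hw), mul_nonneg hε0.le hy,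
    mul_nonneg hε0.le hzpos.le, mul_le_mul_of_nonneg_left h1 hε0.le]
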